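/- For jointly distributed finitely supported random variables X, X', Y, Y', Z with (X,Y) independent of (X',Y'): (a) I(XX';YY'|Z) ≥ I(X;Y|Z) + I(X';Y'|X,Y,Z); (b) I(XX';Z|YY') ≥ I(X;Z|Y) + I(X'; (X,Y,Z) | Y') − I(X,Y; X',Y'); (c) I(YY';Z|XX') ≥ I(Y;Z|X) + I(Y'; (X,Y,Z) | X') − I(X,Y; X',Y'). Here XX' denotes the pair (X,X'), etc. -/

import Mathlib

open Real BigOperators Finset

section Defs
variable {Ω : Type} [Fintype Ω]

/-- `p` is a probability mass function on the finite sample space `Ω`. -/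
def IsPmf (p : Ω → ℝ) : Prop := (∀ ω, 0 ≤ p ω) ∧ ∑ ω, p ω = 1

/-- Distribution of the random variable `f` under `p`. -/
noncomputable def distOf (p : Ω → ℝ) {α : Type} [Fintype α] [DecidableEq α]
    (f : Ω → α) : α → ℝ := fun a => ∑ ω, if f ω = a then p ω else 0

/-- Shannon entropy (in nats) of the random variable `f` under `p`. -/
noncomputable def ent (p : Ω → ℝ) {α : Type} [Fintype α] [DecidableEq α]
    (f : Ω → α) : ℝ := ∑ a, Real.negMulLog (distOf p f a)

/-- Mutual information `I(f;g)` under `p`. -/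
noncomputable def mi (p : Ω → ℝ) {α β : Type} [Fintype α] [DecidableEq α]
    [Fintype β] [DecidableEq β] (f : Ω → α) (g : Ω → β) : ℝ :=
  ent p f + ent p g - ent p (fun ω => (f ω, g ω))

/-- Conditional mutual information `I(f;g|h)` under `p`. -/
noncomputable def cmi (p : Ω → ℝ) {α β γ : Type} [Fintype α] [DecidableEq α]
    [Fintype β] [DecidableEq β] [Fintype γ] [DecidableEq γ]
    (f : Ω → α) (g : Ω → β) (h : Ω → γ) : ℝ :=
  ent p (fun ω => (f ω, h ω)) + ent p (fun ω => (g ω, h ω))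
    - ent p (fun ω => (f ω, g ω, h ω)) - ent p h

end Defs

/-- Tension region of `(X,Y)`: the set of triples
`(I(X;Z|Y), I(Y;Z|X), I(X;Y|Z))` as `Z` ranges over all finitely supported
random variables jointly distributed with `(X,Y)`. -/
def tension {Ω : Type} [Fintype Ω] {α β : Type} [Fintype α] [DecidableEq α]
    [Fintype β] [DecidableEq β] (p : Ω → ℝ) (X : Ω → α) (Y : Ω → β) :
    Set (ℝ × ℝ × ℝ) :=
  { t | ∃ (m : ℕ) (q : α × β × Fin m → ℝ), IsPmf q ∧
      distOf q (fun w => (w.1, w.2.1)) = distOf p (fun ω => (X ω, Y ω)) ∧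
      t = (cmi q (fun w => w.1) (fun w => w.2.2) (fun w => w.2.1),
           cmi q (fun w => w.2.1) (fun w => w.2.2) (fun w => w.1),
           cmi q (fun w => w.1) (fun w => w.2.1) (fun w => w.2.2)) }


section CoreX
variable {α β γ : Type} [Fintype α] [DecidableEq α]
  [Fintype β] [DecidableEq β] [Fintype γ] [DecidableEq γ]

set_option linter.unusedSectionVars false in
lemma core_submod (r : α × β × γ → ℝ) (h0 : ∀ x, 0 ≤ r x) (h1 : ∑ x, r x = 1) :
    ∑ x : α × β × γ, negMulLog (r x) + ∑ c : γ, negMulLog (∑ a, ∑ b, r (a, b, c))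
      ≤ ∑ y : α × γ, negMulLog (∑ b, r (y.1, b, y.2))
        + ∑ y : β × γ, negMulLog (∑ a, r (a, y.1, y.2)) := by
  set A : α → γ → ℝ := fun a c => ∑ b, r (a, b, c) with hA
  set B : β → γ → ℝ := fun b c => ∑ a, r (a, b, c) with hB
  set C : γ → ℝ := fun c => ∑ a, ∑ b, r (a, b, c) with hC
  have hA0 : ∀ a c, 0 ≤ A a c := fun a c => Finset.sum_nonneg fun _ _ => h0 _
  have hB0 : ∀ b c, 0 ≤ B b c := fun b c => Finset.sum_nonneg fun _ _ => h0 _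
  have hC0 : ∀ c, 0 ≤ C c := fun c => Finset.sum_nonneg fun a _ => hA0 a c
  have hrA : ∀ x : α × β × γ, r x ≤ A x.1 x.2.2 := fun x =>
    Finset.single_le_sum (f := fun b => r (x.1, b, x.2.2)) (fun _ _ => h0 _) (Finset.mem_univ x.2.1)
  have hrB : ∀ x : α × β × γ, r x ≤ B x.2.1 x.2.2 := fun x =>
    Finset.single_le_sum (f := fun a => r (a, x.2.1, x.2.2)) (fun _ _ => h0 _) (Finset.mem_univ x.1)
  have hAC : ∀ a c, A a c ≤ C c := fun a c =>
    Finset.single_le_sum (f := fun a => A a c) (fun a _ => hA0 a c) (Finset.mem_univ a)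
  -- pointwise bound
  have key : ∀ x : α × β × γ,
      r x - A x.1 x.2.2 * B x.2.1 x.2.2 / C x.2.2
        ≤ r x * (log (r x) + log (C x.2.2) - log (A x.1 x.2.2) - log (B x.2.1 x.2.2)) := by
    intro x
    rcases eq_or_lt_of_le (h0 x) with hr | hr
    · rw [← hr]
      simp
      have := div_nonneg (mul_nonneg (hA0 x.1 x.2.2) (hB0 x.2.1 x.2.2)) (hC0 x.2.2)
      linarith
    · have hA' : 0 < A x.1 x.2.2 := lt_of_lt_of_le hr (hrA x)
      have hB' : 0 < B x.2.1 x.2.2 := lt_of_lt_of_le hr (hrB x)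
      have hC' : 0 < C x.2.2 := lt_of_lt_of_le hA' (hAC x.1 x.2.2)
      have hlog := Real.log_le_sub_one_of_pos
        (show 0 < A x.1 x.2.2 * B x.2.1 x.2.2 / (r x * C x.2.2) by positivity)
      rw [Real.log_div (by positivity) (by positivity), Real.log_mul (ne_of_gt hA') (ne_of_gt hB'),
        Real.log_mul (ne_of_gt hr) (ne_of_gt hC')] at hlog
      have h2 := mul_le_mul_of_nonneg_left hlog (le_of_lt hr)
      have h3 : r x * (A x.1 x.2.2 * B x.2.1 x.2.2 / (r x * C x.2.2) - 1)
          = A x.1 x.2.2 * B x.2.1 x.2.2 / C x.2.2 - r x := by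
        field_simp
      nlinarith [h2, h3]
  -- reindexing helper
  have reidx13 : ∀ F : α × β × γ → ℝ,
      ∑ y : α × γ, ∑ b, F (y.1, b, y.2) = ∑ x : α × β × γ, F x := by
    intro F
    rw [Fintype.sum_prod_type, Fintype.sum_prod_type]
    refine Finset.sum_congr rfl fun a _ => ?_
    rw [Fintype.sum_prod_type, Finset.sum_comm]
  have reidx23 : ∀ F : α × β × γ → ℝ,
      ∑ y : β × γ, ∑ a, F (a, y.1, y.2) = ∑ x : α × β × γ, F x := by
    intro F
    rw [Fintype.sum_prod_type, Fintype.sum_prod_type]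
    simp only [Fintype.sum_prod_type]
    exact Eq.trans (Finset.sum_congr rfl fun b _ => Finset.sum_comm) Finset.sum_comm
  have reidx3 : ∀ F : α × β × γ → ℝ,
      ∑ c : γ, ∑ a, ∑ b, F (a, b, c) = ∑ x : α × β × γ, F x := by
    intro F
    rw [Fintype.sum_prod_type]
    rw [Finset.sum_comm]
    refine Finset.sum_congr rfl fun a _ => ?_
    rw [Fintype.sum_prod_type, Finset.sum_comm]
  have hCsum : ∑ c, C c = 1 := by
    have h2 := reidx3 r
    rw [h1] at h2
    exact h2
  -- sum of the S term
  have hS : ∑ x : α × β × γ, A x.1 x.2.2 * B x.2.1 x.2.2 / C x.2.2 ≤ 1 := by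
    rw [← reidx3 (fun x => A x.1 x.2.2 * B x.2.1 x.2.2 / C x.2.2)]
    have inner : ∀ c, ∑ a, ∑ b, A a c * B b c / C c ≤ C c := by
      intro c
      have e : ∑ a, ∑ b, A a c * B b c / C c = (∑ a, A a c) * ((∑ b, B b c) / C c) := by
        rw [Finset.sum_mul]
        refine Finset.sum_congr rfl fun a _ => ?_
        rw [Finset.sum_div, Finset.mul_sum]
        exact Finset.sum_congr rfl fun b _ => mul_div_assoc _ _ _
      have hsA : ∑ a, A a c = C c := rfl
      have hsB : ∑ b, B b c = C c := by
        simp only [hB, hC]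
        exact Finset.sum_comm
      rw [e, hsA, hsB]
      rcases eq_or_lt_of_le (hC0 c) with h | h
      · rw [← h]; simp
      · rw [div_self (ne_of_gt h), mul_one]
    calc ∑ c, ∑ a, ∑ b, A a c * B b c / C c ≤ ∑ c, C c :=
          Finset.sum_le_sum fun c _ => inner c
      _ = 1 := hCsum
  -- expand the entropies into sums over the joint
  have E1 : ∑ y : α × γ, negMulLog (∑ b, r (y.1, b, y.2))
      = -∑ x : α × β × γ, r x * log (A x.1 x.2.2) := by
    rw [← reidx13 (fun x => r x * log (A x.1 x.2.2)), ← Finset.sum_neg_distrib]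
    refine Finset.sum_congr rfl fun y _ => ?_
    show negMulLog (∑ b, r (y.1, b, y.2)) = -∑ b, r (y.1, b, y.2) * log (A y.1 y.2)
    rw [negMulLog, neg_mul, ← Finset.sum_mul]
  have E2 : ∑ y : β × γ, negMulLog (∑ a, r (a, y.1, y.2))
      = -∑ x : α × β × γ, r x * log (B x.2.1 x.2.2) := by
    rw [← reidx23 (fun x => r x * log (B x.2.1 x.2.2)), ← Finset.sum_neg_distrib]
    refine Finset.sum_congr rfl fun y _ => ?_
    show negMulLog (∑ a, r (a, y.1, y.2)) = -∑ a, r (a, y.1, y.2) * log (B y.1 y.2)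
    rw [negMulLog, neg_mul, ← Finset.sum_mul]
  have E3 : ∑ c : γ, negMulLog (∑ a, ∑ b, r (a, b, c))
      = -∑ x : α × β × γ, r x * log (C x.2.2) := by
    rw [← reidx3 (fun x => r x * log (C x.2.2)), ← Finset.sum_neg_distrib]
    refine Finset.sum_congr rfl fun c _ => ?_
    show negMulLog (∑ a, ∑ b, r (a, b, c)) = -∑ a, ∑ b, r (a, b, c) * log (C c)
    rw [negMulLog, neg_mul]
    congr 1
    rw [Finset.sum_mul]
    refine Finset.sum_congr rfl fun a _ => ?_
    rw [Finset.sum_mul]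
  have E0 : ∑ x : α × β × γ, negMulLog (r x) = -∑ x : α × β × γ, r x * log (r x) := by
    rw [← Finset.sum_neg_distrib]
    exact Finset.sum_congr rfl fun x _ => by rw [negMulLog, neg_mul]
  have hTsum : 1 - ∑ x : α × β × γ, A x.1 x.2.2 * B x.2.1 x.2.2 / C x.2.2
      ≤ ∑ x : α × β × γ,
          r x * (log (r x) + log (C x.2.2) - log (A x.1 x.2.2) - log (B x.2.1 x.2.2)) := by
    have := Finset.sum_le_sum (s := (Finset.univ : Finset (α × β × γ))) fun x _ => key x
    rw [Finset.sum_sub_distrib, h1] at this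
    exact this
  have split : ∑ x : α × β × γ,
        r x * (log (r x) + log (C x.2.2) - log (A x.1 x.2.2) - log (B x.2.1 x.2.2))
      = ∑ x : α × β × γ, r x * log (r x) + ∑ x : α × β × γ, r x * log (C x.2.2)
        - ∑ x : α × β × γ, r x * log (A x.1 x.2.2)
        - ∑ x : α × β × γ, r x * log (B x.2.1 x.2.2) := by
    rw [← Finset.sum_add_distrib, ← Finset.sum_sub_distrib, ← Finset.sum_sub_distrib]
    exact Finset.sum_congr rfl fun x _ => by ring
  rw [E0, E1, E2, E3]
  linarith [hTsum, hS, split]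

end CoreX

section AuxX
variable {Ω : Type} [Fintype Ω] {α β γ : Type} [Fintype α] [DecidableEq α]
  [Fintype β] [DecidableEq β] [Fintype γ] [DecidableEq γ]

lemma distOf_nonneg (p : Ω → ℝ) (hp : ∀ ω, 0 ≤ p ω) (f : Ω → α) (a : α) :
    0 ≤ distOf p f a :=
  Finset.sum_nonneg fun ω _ => by split <;> simp [hp ω]

lemma sum_distOf (p : Ω → ℝ) (f : Ω → α) : ∑ a, distOf p f a = ∑ ω, p ω := by
  unfold distOf
  rw [Finset.sum_comm]
  simp

lemma ent_comp_inj (p : Ω → ℝ) (f : Ω → α) (e : α → β) (he : Function.Injective e) :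
    ent p (fun ω => e (f ω)) = ent p f := by
  unfold ent
  have hz : ∀ b ∈ Finset.univ, b ∉ Finset.univ.image e →
      negMulLog (distOf p (fun ω => e (f ω)) b) = 0 := by
    intro b _ hb
    have : distOf p (fun ω => e (f ω)) b = 0 := by
      unfold distOf
      refine Finset.sum_eq_zero fun ω _ => ?_
      have : e (f ω) ≠ b := fun h => hb (Finset.mem_image.2 ⟨f ω, Finset.mem_univ _, h⟩)
      simp [this]
    simp [this]
  rw [← Finset.sum_subset (Finset.subset_univ (Finset.univ.image e)) hz,
    Finset.sum_image (fun x _ y _ h => he h)]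
  refine Finset.sum_congr rfl fun a _ => ?_
  congr 1
  unfold distOf
  refine Finset.sum_congr rfl fun ω _ => ?_
  simp [he.eq_iff]

lemma distOf_marg1 (p : Ω → ℝ) (f : Ω → α) (g : Ω → β) (h : Ω → γ) (y : α × γ) :
    distOf p (fun ω => (f ω, h ω)) y
      = ∑ b, distOf p (fun ω => (f ω, g ω, h ω)) (y.1, b, y.2) := by
  unfold distOf
  rw [Finset.sum_comm]
  refine Finset.sum_congr rfl fun ω _ => ?_
  by_cases hfh : f ω = y.1 ∧ h ω = y.2
  · have : ∀ b, ((f ω, g ω, h ω) = (y.1, b, y.2)) ↔ (g ω = b) := by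
      intro b; simp [Prod.ext_iff, hfh.1, hfh.2]
    simp only [this]
    rw [Finset.sum_ite_eq Finset.univ (g ω) (fun _ => p ω)]
    simp [Prod.ext_iff, hfh.1, hfh.2]
  · have h1 : ¬ ((f ω, h ω) = y) := by simp [Prod.ext_iff]; tauto
    have h2 : ∀ b, ¬ ((f ω, g ω, h ω) = (y.1, b, y.2)) := by
      intro b; simp [Prod.ext_iff]; tauto
    simp [h1, h2]

lemma distOf_marg2 (p : Ω → ℝ) (f : Ω → α) (g : Ω → β) (h : Ω → γ) (y : β × γ) :
    distOf p (fun ω => (g ω, h ω)) y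
      = ∑ a, distOf p (fun ω => (f ω, g ω, h ω)) (a, y.1, y.2) := by
  unfold distOf
  rw [Finset.sum_comm]
  refine Finset.sum_congr rfl fun ω _ => ?_
  by_cases hgh : g ω = y.1 ∧ h ω = y.2
  · have : ∀ a, ((f ω, g ω, h ω) = (a, y.1, y.2)) ↔ (f ω = a) := by
      intro a; simp [Prod.ext_iff, hgh.1, hgh.2]
    simp only [this]
    rw [Finset.sum_ite_eq Finset.univ (f ω) (fun _ => p ω)]
    simp [Prod.ext_iff, hgh.1, hgh.2]
  · have h1 : ¬ ((g ω, h ω) = y) := by simp [Prod.ext_iff]; tauto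
    have h2 : ∀ a, ¬ ((f ω, g ω, h ω) = (a, y.1, y.2)) := by
      intro a; simp [Prod.ext_iff]; tauto
    simp [h1, h2]

lemma distOf_marg3 (p : Ω → ℝ) (f : Ω → α) (g : Ω → β) (h : Ω → γ) (c : γ) :
    distOf p h c = ∑ a, ∑ b, distOf p (fun ω => (f ω, g ω, h ω)) (a, b, c) := by
  have e1 : distOf p h c = ∑ a, distOf p (fun ω => (f ω, h ω)) (a, c) := by
    unfold distOf
    rw [Finset.sum_comm]
    refine Finset.sum_congr rfl fun ω _ => ?_
    by_cases hh : h ω = c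
    · have : ∀ a, ((f ω, h ω) = (a, c)) ↔ (f ω = a) := by
        intro a; simp [Prod.ext_iff, hh]
      simp only [this]
      rw [Finset.sum_ite_eq Finset.univ (f ω) (fun _ => p ω)]
      simp [hh]
    · have h2 : ∀ a, ¬ ((f ω, h ω) = (a, c)) := by
        intro a; simp [Prod.ext_iff]; tauto
      simp [hh, h2]
  rw [e1]
  exact Finset.sum_congr rfl fun a _ => distOf_marg1 p f g h (a, c)

lemma cmi_nonneg (p : Ω → ℝ) (hp : IsPmf p) (f : Ω → α) (g : Ω → β) (h : Ω → γ) :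
    0 ≤ cmi p f g h := by
  set r : α × β × γ → ℝ := distOf p (fun ω => (f ω, g ω, h ω)) with hr
  have h0 : ∀ x, 0 ≤ r x := fun x => distOf_nonneg p hp.1 _ x
  have h1 : ∑ x, r x = 1 := by rw [hr, sum_distOf, hp.2]
  have key := core_submod r h0 h1
  unfold cmi ent
  have m1 : ∀ y : α × γ, distOf p (fun ω => (f ω, h ω)) y = ∑ b, r (y.1, b, y.2) :=
    fun y => distOf_marg1 p f g h y
  have m2 : ∀ y : β × γ, distOf p (fun ω => (g ω, h ω)) y = ∑ a, r (a, y.1, y.2) :=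
    fun y => distOf_marg2 p f g h y
  have m3 : ∀ c, distOf p h c = ∑ a, ∑ b, r (a, b, c) :=
    fun c => distOf_marg3 p f g h c
  simp only [m1, m2, m3]
  have : ∑ x : α × β × γ, negMulLog (distOf p (fun ω => (f ω, g ω, h ω)) x)
      = ∑ x : α × β × γ, negMulLog (r x) := rfl
  rw [this]
  linarith [key]

lemma ent_const_fin1 (p : Ω → ℝ) (hp : IsPmf p) :
    ent p (fun _ : Ω => (0 : Fin 1)) = 0 := by
  unfold ent distOf
  rw [Fin.sum_univ_one]
  simp [hp.2]

lemma mi_nonneg (p : Ω → ℝ) (hp : IsPmf p) (f : Ω → α) (g : Ω → β) :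
    0 ≤ mi p f g := by
  have h := cmi_nonneg p hp f g (fun _ => (0 : Fin 1))
  unfold cmi at h
  rw [ent_comp_inj p f (fun a => (a, (0 : Fin 1)))
      (fun x y hxy => congrArg Prod.fst hxy),
    ent_comp_inj p g (fun b => (b, (0 : Fin 1)))
      (fun x y hxy => congrArg Prod.fst hxy),
    ent_comp_inj p (fun ω => (f ω, g ω)) (fun x => (x.1, x.2, (0 : Fin 1)))
      (fun x y hxy => by simpa [Prod.ext_iff] using hxy),
    ent_const_fin1 p hp] at h
  unfold mi
  linarith [h]
end AuxX

/-- For `(X,Y)` independent of `(X',Y')`, three Shannon inequalities: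
(a) `I(XX';YY'|Z) ≥ I(X;Y|Z) + I(X';Y'|XYZ)`;
(b) `I(XX';Z|YY') ≥ I(X;Z|Y) + I(X';XYZ|Y') - I(XY;X'Y')`;
(c) `I(YY';Z|XX') ≥ I(Y;Z|X) + I(Y';XYZ|X') - I(XY;X'Y')`. -/
theorem stmt10 {Ω α β α' β' γ : Type} [Fintype Ω]
    [Fintype α] [DecidableEq α] [Fintype β] [DecidableEq β]
    [Fintype α'] [DecidableEq α'] [Fintype β'] [DecidableEq β']
    [Fintype γ] [DecidableEq γ]
    (p : Ω → ℝ) (hp : IsPmf p)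
    (X : Ω → α) (Y : Ω → β) (X' : Ω → α') (Y' : Ω → β') (Z : Ω → γ)
    (hind : mi p (fun ω => (X ω, Y ω)) (fun ω => (X' ω, Y' ω)) = 0) :
    (cmi p (fun ω => (X ω, X' ω)) (fun ω => (Y ω, Y' ω)) Z
      ≥ cmi p X Y Z + cmi p X' Y' (fun ω => (X ω, Y ω, Z ω))) ∧
    (cmi p (fun ω => (X ω, X' ω)) Z (fun ω => (Y ω, Y' ω))
      ≥ cmi p X Z Y + cmi p X' (fun ω => (X ω, Y ω, Z ω)) Y'
        - mi p (fun ω => (X ω, Y ω)) (fun ω => (X' ω, Y' ω))) ∧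
    (cmi p (fun ω => (Y ω, Y' ω)) Z (fun ω => (X ω, X' ω))
      ≥ cmi p Y Z X + cmi p Y' (fun ω => (X ω, Y ω, Z ω)) X'
        - mi p (fun ω => (X ω, Y ω)) (fun ω => (X' ω, Y' ω))) := by
  refine ⟨?_, ?_, ?_⟩
  · have I1 := cmi_nonneg p hp X Y' (fun ω => (Y ω, Z ω))
    have I2 := cmi_nonneg p hp X' Y (fun ω => (X ω, Z ω))
    have e1 : ent p (fun ω => ((X ω, X' ω), Z ω)) = ent p (fun ω => (X' ω, X ω, Z ω)) :=
      ent_comp_inj p (fun ω => (X' ω, X ω, Z ω)) (fun w => ((w.2.1, w.1), w.2.2)) (by intro u v huv; simp only [Prod.mk.injEq] at huv; simp only [Prod.ext_iff]; tauto)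
    have e2 : ent p (fun ω => ((Y ω, Y' ω), Z ω)) = ent p (fun ω => (Y' ω, Y ω, Z ω)) :=
      ent_comp_inj p (fun ω => (Y' ω, Y ω, Z ω)) (fun w => ((w.2.1, w.1), w.2.2)) (by intro u v huv; simp only [Prod.mk.injEq] at huv; simp only [Prod.ext_iff]; tauto)
    have e3 : ent p (fun ω => ((X ω, X' ω), (Y ω, Y' ω), Z ω))
        = ent p (fun ω => (X' ω, Y' ω, (X ω, Y ω, Z ω))) :=
      ent_comp_inj p (fun ω => (X' ω, Y' ω, (X ω, Y ω, Z ω)))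
        (fun w => ((w.2.2.1, w.1), (w.2.2.2.1, w.2.1), w.2.2.2.2)) (by intro u v huv; simp only [Prod.mk.injEq] at huv; simp only [Prod.ext_iff]; tauto)
    have e4 : ent p (fun ω => (X' ω, Y ω, (X ω, Z ω)))
        = ent p (fun ω => (X' ω, (X ω, Y ω, Z ω))) :=
      ent_comp_inj p (fun ω => (X' ω, (X ω, Y ω, Z ω))) (fun w => (w.1, w.2.2.1, (w.2.1, w.2.2.2))) (by intro u v huv; simp only [Prod.mk.injEq] at huv; simp only [Prod.ext_iff]; tauto)
    have e5 : ent p (fun ω => (X ω, Y' ω, (Y ω, Z ω)))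
        = ent p (fun ω => (Y' ω, (X ω, Y ω, Z ω))) :=
      ent_comp_inj p (fun ω => (Y' ω, (X ω, Y ω, Z ω))) (fun w => (w.2.1, w.1, (w.2.2.1, w.2.2.2))) (by intro u v huv; simp only [Prod.mk.injEq] at huv; simp only [Prod.ext_iff]; tauto)
    have e6 : ent p (fun ω => (Y ω, (X ω, Z ω))) = ent p (fun ω => (X ω, Y ω, Z ω)) :=
      ent_comp_inj p (fun ω => (X ω, Y ω, Z ω)) (fun w => (w.2.1, (w.1, w.2.2))) (by intro u v huv; simp only [Prod.mk.injEq] at huv; simp only [Prod.ext_iff]; tauto)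
    simp only [cmi, ge_iff_le] at I1 I2 ⊢
    linarith
  · have I1 := cmi_nonneg p hp X Y' (fun ω => (Y ω, Z ω))
    have I3 := mi_nonneg p hp Y Y'
    have f1 : ent p (fun ω => ((X ω, X' ω), (Y ω, Y' ω)))
        = ent p (fun ω => ((X ω, Y ω), (X' ω, Y' ω))) :=
      ent_comp_inj p (fun ω => ((X ω, Y ω), (X' ω, Y' ω))) (fun w => ((w.1.1, w.2.1), (w.1.2, w.2.2))) (by intro u v huv; simp only [Prod.mk.injEq] at huv; simp only [Prod.ext_iff]; tauto)
    have f2 : ent p (fun ω => (Z ω, (Y ω, Y' ω)))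
        = ent p (fun ω => (Y' ω, (Y ω, Z ω))) :=
      ent_comp_inj p (fun ω => (Y' ω, (Y ω, Z ω))) (fun w => (w.2.2, (w.2.1, w.1))) (by intro u v huv; simp only [Prod.mk.injEq] at huv; simp only [Prod.ext_iff]; tauto)
    have f3 : ent p (fun ω => ((X ω, X' ω), Z ω, (Y ω, Y' ω)))
        = ent p (fun ω => (X' ω, (X ω, Y ω, Z ω), Y' ω)) :=
      ent_comp_inj p (fun ω => (X' ω, (X ω, Y ω, Z ω), Y' ω))
        (fun w => ((w.2.1.1, w.1), (w.2.1.2.2, (w.2.1.2.1, w.2.2)))) (by intro u v huv; simp only [Prod.mk.injEq] at huv; simp only [Prod.ext_iff]; tauto)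
    have f4 : ent p (fun ω => (Z ω, Y ω)) = ent p (fun ω => (Y ω, Z ω)) :=
      ent_comp_inj p (fun ω => (Y ω, Z ω)) (fun w => (w.2, w.1)) (by intro u v huv; simp only [Prod.mk.injEq] at huv; simp only [Prod.ext_iff]; tauto)
    have f5 : ent p (fun ω => (X ω, Z ω, Y ω)) = ent p (fun ω => (X ω, Y ω, Z ω)) :=
      ent_comp_inj p (fun ω => (X ω, Y ω, Z ω)) (fun w => (w.1, w.2.2, w.2.1)) (by intro u v huv; simp only [Prod.mk.injEq] at huv; simp only [Prod.ext_iff]; tauto)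
    have f6 : ent p (fun ω => ((X ω, Y ω, Z ω), Y' ω))
        = ent p (fun ω => (X ω, Y' ω, (Y ω, Z ω))) :=
      ent_comp_inj p (fun ω => (X ω, Y' ω, (Y ω, Z ω))) (fun w => ((w.1, w.2.2.1, w.2.2.2), w.2.1)) (by intro u v huv; simp only [Prod.mk.injEq] at huv; simp only [Prod.ext_iff]; tauto)
    simp only [cmi, mi, ge_iff_le] at I1 I3 ⊢
    linarith
  · have I2 := cmi_nonneg p hp Y X' (fun ω => (X ω, Z ω))
    have I4 := mi_nonneg p hp X X'
    have g1 : ent p (fun ω => (Y ω, X ω)) = ent p (fun ω => (X ω, Y ω)) :=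
      ent_comp_inj p (fun ω => (X ω, Y ω)) (fun w => (w.2, w.1)) (by intro u v huv; simp only [Prod.mk.injEq] at huv; simp only [Prod.ext_iff]; tauto)
    have g2 : ent p (fun ω => (Y' ω, X' ω)) = ent p (fun ω => (X' ω, Y' ω)) :=
      ent_comp_inj p (fun ω => (X' ω, Y' ω)) (fun w => (w.2, w.1)) (by intro u v huv; simp only [Prod.mk.injEq] at huv; simp only [Prod.ext_iff]; tauto)
    have g3 : ent p (fun ω => (Z ω, X ω)) = ent p (fun ω => (X ω, Z ω)) :=
      ent_comp_inj p (fun ω => (X ω, Z ω)) (fun w => (w.2, w.1)) (by intro u v huv; simp only [Prod.mk.injEq] at huv; simp only [Prod.ext_iff]; tauto)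
    have g4 : ent p (fun ω => (Y ω, Z ω, X ω)) = ent p (fun ω => (Y ω, (X ω, Z ω))) :=
      ent_comp_inj p (fun ω => (Y ω, (X ω, Z ω))) (fun w => (w.1, (w.2.2, w.2.1))) (by intro u v huv; simp only [Prod.mk.injEq] at huv; simp only [Prod.ext_iff]; tauto)
    have g5 : ent p (fun ω => ((X ω, Y ω, Z ω), X' ω))
        = ent p (fun ω => (Y ω, X' ω, (X ω, Z ω))) :=
      ent_comp_inj p (fun ω => (Y ω, X' ω, (X ω, Z ω))) (fun w => ((w.2.2.1, w.1, w.2.2.2), w.2.1)) (by intro u v huv; simp only [Prod.mk.injEq] at huv; simp only [Prod.ext_iff]; tauto)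
    have g6 : ent p (fun ω => ((Y ω, Y' ω), (X ω, X' ω)))
        = ent p (fun ω => ((X ω, Y ω), (X' ω, Y' ω))) :=
      ent_comp_inj p (fun ω => ((X ω, Y ω), (X' ω, Y' ω))) (fun w => ((w.1.2, w.2.2), (w.1.1, w.2.1))) (by intro u v huv; simp only [Prod.mk.injEq] at huv; simp only [Prod.ext_iff]; tauto)
    have g7 : ent p (fun ω => (Z ω, (X ω, X' ω)))
        = ent p (fun ω => (X' ω, (X ω, Z ω))) :=
      ent_comp_inj p (fun ω => (X' ω, (X ω, Z ω))) (fun w => (w.2.2, (w.2.1, w.1))) (by intro u v huv; simp only [Prod.mk.injEq] at huv; simp only [Prod.ext_iff]; tauto)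
    have g8 : ent p (fun ω => ((Y ω, Y' ω), Z ω, (X ω, X' ω)))
        = ent p (fun ω => (Y' ω, (X ω, Y ω, Z ω), X' ω)) :=
      ent_comp_inj p (fun ω => (Y' ω, (X ω, Y ω, Z ω), X' ω))
        (fun w => ((w.2.1.2.1, w.1), (w.2.1.2.2, (w.2.1.1, w.2.2)))) (by intro u v huv; simp only [Prod.mk.injEq] at huv; simp only [Prod.ext_iff]; tauto)
    simp only [cmi, mi, ge_iff_le] at I2 I4 ⊢
    linarith
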